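/- Fix the parameters of system i and an exchange efficiency β_E ∈ [0,1] and factor β_B ∈ {0,1}. Define the value function C̄_i(e_i, e_ī, w_i, w_ī) as the infimum of α_i^E·E + α_i^G·G over all (E, G, (p_k), (b_k)) with E, G, p_k ≥ 0, b_k > 0, E ≤ Ē_i, Σ_k p_k + P_{c,i} ≤ E + G + β_E·e_ī − e_i, Σ_k b_k ≤ W_i + β_B·w_ī − w_i, and b_k·log₂(1 + g_k·p_k/(b_k·N₀)) ≥ r_k for all k ∈ K_i. Then C̄_i is a convex function on the convex domain D = {(e_i, e_ī, w_i, w_ī) ∈ ℝ⁴ : all components ≥ 0 and w_i − β_B·w_ī < W_i}. -/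

import Mathlib

set_option maxHeartbeats 2000000

section Aux

/-- Concavity inequality for `x ↦ logb 2 (1 + c*x)` on nonnegative reals. -/
lemma logb_one_add_concave {c x1 x2 w1 w2 : ℝ} (hc : 0 < c)
    (hx1 : 0 ≤ x1) (hx2 : 0 ≤ x2) (hw1 : 0 ≤ w1) (hw2 : 0 ≤ w2) (hw : w1 + w2 = 1) :
    w1 * Real.logb 2 (1 + c * x1) + w2 * Real.logb 2 (1 + c * x2) ≤
      Real.logb 2 (1 + c * (w1 * x1 + w2 * x2)) := by
  have h1 : (0:ℝ) < 1 + c * x1 := by nlinarith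
  have h2 : (0:ℝ) < 1 + c * x2 := by nlinarith
  have hlog := strictConcaveOn_log_Ioi.concaveOn.2 (Set.mem_Ioi.mpr h1) (Set.mem_Ioi.mpr h2)
    hw1 hw2 hw
  have heq : w1 • (1 + c * x1) + w2 • (1 + c * x2) = 1 + c * (w1 * x1 + w2 * x2) := by
    simp only [smul_eq_mul]; nlinarith [hw]
  rw [heq] at hlog
  simp only [smul_eq_mul] at hlog
  have hl2 : (0:ℝ) < Real.log 2 := Real.log_pos one_lt_two
  unfold Real.logb
  have heq2 : w1 * (Real.log (1 + c * x1) / Real.log 2) +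
      w2 * (Real.log (1 + c * x2) / Real.log 2) =
      (w1 * Real.log (1 + c * x1) + w2 * Real.log (1 + c * x2)) / Real.log 2 := by ring
  rw [heq2]
  gcongr

/-- A convex combination of positives is positive when weights sum to 1. -/
lemma convex_pos {a b x y : ℝ} (ha : 0 ≤ a) (hb : 0 ≤ b) (hab : a + b = 1)
    (hx : 0 < x) (hy : 0 < y) : 0 < a * x + b * y := by
  have hm : 0 < min x y := lt_min hx hy
  have hx' : a * min x y ≤ a * x := mul_le_mul_of_nonneg_left (min_le_left x y) ha
  have hy' : b * min x y ≤ b * y := mul_le_mul_of_nonneg_left (min_le_right x y) hb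
  have h2 : a * min x y + b * min x y = min x y := by rw [← add_mul, hab, one_mul]
  linarith

/-- Perspective / joint concavity of the rate function. -/
lemma rate_concave {c p1 p2 b1 b2 a b : ℝ} (hc : 0 < c)
    (hp1 : 0 ≤ p1) (hp2 : 0 ≤ p2) (hb1 : 0 < b1) (hb2 : 0 < b2)
    (ha : 0 ≤ a) (hb' : 0 ≤ b) (hab : a + b = 1) :
    a * (b1 * Real.logb 2 (1 + c * (p1 / b1))) + b * (b2 * Real.logb 2 (1 + c * (p2 / b2))) ≤
      (a * b1 + b * b2) * Real.logb 2 (1 + c * ((a * p1 + b * p2) / (a * b1 + b * b2))) := by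
  set B := a * b1 + b * b2 with hB
  have hBpos : 0 < B := convex_pos ha hb' hab hb1 hb2
  have hw1 : 0 ≤ a * b1 / B := by positivity
  have hw2 : 0 ≤ b * b2 / B := by positivity
  have hwsum : a * b1 / B + b * b2 / B = 1 := by field_simp; exact hB.symm
  have hkey := logb_one_add_concave hc (div_nonneg hp1 hb1.le) (div_nonneg hp2 hb2.le)
    hw1 hw2 hwsum
  have harg : a * b1 / B * (p1 / b1) + b * b2 / B * (p2 / b2) = (a * p1 + b * p2) / B := by
    field_simp
  rw [harg] at hkey
  have := mul_le_mul_of_nonneg_left hkey hBpos.le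
  calc a * (b1 * Real.logb 2 (1 + c * (p1 / b1))) + b * (b2 * Real.logb 2 (1 + c * (p2 / b2)))
      = B * (a * b1 / B * Real.logb 2 (1 + c * (p1 / b1)) +
             b * b2 / B * Real.logb 2 (1 + c * (p2 / b2))) := by
        field_simp
    _ ≤ B * Real.logb 2 (1 + c * ((a * p1 + b * p2) / B)) := this
    _ = _ := rfl

end Aux

/-- The minimum-cost (value) function `C̄_i` of system `i` as a function of the
inter-system exchange vector `v = (e_i, e_ī, w_i, w_ī)`. -/
noncomputable def Cbar {ι : Type*} (K : Finset ι) (g r : ι → ℝ)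
    (N₀ W Pc Ebar αE αG βE βB : ℝ) (v : ℝ × ℝ × ℝ × ℝ) : ℝ :=
  sInf {c : ℝ | ∃ (E G : ℝ) (p b : ι → ℝ),
    0 ≤ E ∧ 0 ≤ G ∧ (∀ k ∈ K, 0 ≤ p k) ∧ (∀ k ∈ K, 0 < b k) ∧ E ≤ Ebar ∧
    (∑ k ∈ K, p k) + Pc ≤ E + G + βE * v.2.1 - v.1 ∧
    (∑ k ∈ K, b k) ≤ W + βB * v.2.2.2 - v.2.2.1 ∧
    (∀ k ∈ K, r k ≤ b k * Real.logb 2 (1 + g k * p k / (b k * N₀))) ∧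
    c = αE * E + αG * G}

/-- The value function `C̄_i` is convex on the convex domain
`D = {v ∈ ℝ⁴ : v ≥ 0 componentwise, w_i − β_B·w_ī < W_i}`. -/
theorem Cbar_convexOn {ι : Type*} (K : Finset ι) (hK : K.Nonempty)
    (g r : ι → ℝ) (hg : ∀ k ∈ K, 0 < g k) (hr : ∀ k ∈ K, 0 < r k)
    (N₀ W Pc Ebar αE αG βE βB : ℝ)
    (hN₀ : 0 < N₀) (hW : 0 < W) (hPc : 0 ≤ Pc) (hEbar : 0 ≤ Ebar)
    (hαE : 0 < αE) (hα : αE < αG) (hβE : βE ∈ Set.Icc (0 : ℝ) 1)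
    (hβB : βB = 0 ∨ βB = 1) :
    ConvexOn ℝ
      {v : ℝ × ℝ × ℝ × ℝ | 0 ≤ v.1 ∧ 0 ≤ v.2.1 ∧ 0 ≤ v.2.2.1 ∧ 0 ≤ v.2.2.2 ∧
        v.2.2.1 - βB * v.2.2.2 < W}
      (Cbar K g r N₀ W Pc Ebar αE αG βE βB) := by
  have hβB0 : 0 ≤ βB := by rcases hβB with h | h <;> simp [h]
  have hαG : 0 < αG := hαE.trans hα
  -- feasible set
  set S : (ℝ × ℝ × ℝ × ℝ) → Set ℝ := fun v => {c : ℝ | ∃ (E G : ℝ) (p b : ι → ℝ),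
    0 ≤ E ∧ 0 ≤ G ∧ (∀ k ∈ K, 0 ≤ p k) ∧ (∀ k ∈ K, 0 < b k) ∧ E ≤ Ebar ∧
    (∑ k ∈ K, p k) + Pc ≤ E + G + βE * v.2.1 - v.1 ∧
    (∑ k ∈ K, b k) ≤ W + βB * v.2.2.2 - v.2.2.1 ∧
    (∀ k ∈ K, r k ≤ b k * Real.logb 2 (1 + g k * p k / (b k * N₀))) ∧
    c = αE * E + αG * G} with hS
  have hCbar : ∀ v, Cbar K g r N₀ W Pc Ebar αE αG βE βB v = sInf (S v) := fun v => rfl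
  -- boundedness below
  have hbdd : ∀ v, BddBelow (S v) := by
    intro v
    refine ⟨0, fun c hc => ?_⟩
    obtain ⟨E, G, p, b, hE, hG, _, _, _, _, _, _, hc⟩ := hc
    rw [hc]; positivity
  -- nonemptiness on the domain
  have hne : ∀ v : ℝ × ℝ × ℝ × ℝ, 0 ≤ v.1 → 0 ≤ v.2.1 → 0 ≤ v.2.2.1 → 0 ≤ v.2.2.2 →
      v.2.2.1 - βB * v.2.2.2 < W → (S v).Nonempty := by
    intro v hv1 hv2 hv3 hv4 hv5
    set sl : ℝ := W + βB * v.2.2.2 - v.2.2.1 with hsl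
    have hslpos : 0 < sl := by simp only [hsl]; linarith
    have hn : (0:ℝ) < K.card := by exact_mod_cast Finset.card_pos.mpr hK
    set bb : ℝ := sl / K.card with hbb
    have hbbpos : 0 < bb := div_pos hslpos hn
    set p : ι → ℝ := fun k => bb * N₀ * ((2:ℝ) ^ (r k / bb) - 1) / g k with hp
    have hpnn : ∀ k ∈ K, 0 ≤ p k := by
      intro k hk
      have h2 : (1:ℝ) ≤ (2:ℝ) ^ (r k / bb) :=
        Real.one_le_rpow one_le_two (div_nonneg (hr k hk).le hbbpos.le)
      have hgk := hg k hk
      simp only [hp]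
      exact div_nonneg (mul_nonneg (by positivity) (by linarith)) hgk.le
    refine ⟨αE * 0 + αG * ((∑ k ∈ K, p k) + Pc + v.1), 0,
      (∑ k ∈ K, p k) + Pc + v.1, p, fun _ => bb, le_refl 0, ?_, hpnn,
      fun _ _ => hbbpos, hEbar, ?_, ?_, ?_, rfl⟩
    · have : 0 ≤ ∑ k ∈ K, p k := Finset.sum_nonneg hpnn
      linarith
    · have : 0 ≤ βE * v.2.1 := mul_nonneg hβE.1 hv2
      linarith
    · rw [Finset.sum_const, nsmul_eq_mul, hbb]
      rw [mul_div_cancel₀ _ (ne_of_gt hn)]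
    · intro k hk
      have hgk := hg k hk
      have harg : g k * p k / (bb * N₀) = (2:ℝ) ^ (r k / bb) - 1 := by
        simp only [hp]
        field_simp
      rw [harg]
      have : (1:ℝ) + ((2:ℝ) ^ (r k / bb) - 1) = (2:ℝ) ^ (r k / bb) := by ring
      rw [this, Real.logb_rpow (by norm_num) (by norm_num)]
      rw [mul_div_cancel₀ _ (ne_of_gt hbbpos)]
  constructor
  · -- convexity of the domain
    rintro ⟨x1, x2, x3, x4⟩ ⟨hx1, hx2, hx3, hx4, hx5⟩ ⟨y1, y2, y3, y4⟩
      ⟨hy1, hy2, hy3, hy4, hy5⟩ a b ha hb hab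
    simp only [Prod.smul_mk, Prod.mk_add_mk, smul_eq_mul, Set.mem_setOf_eq] at *
    refine ⟨by positivity, by positivity, by positivity, by positivity, ?_⟩
    rcases eq_or_lt_of_le ha with h | h
    · have hb1 : b = 1 := by linarith
      simp [← h, hb1]; linarith
    · have h1 : a * (x3 - βB * x4) < a * W := by exact mul_lt_mul_of_pos_left hx5 h
      have h2 : b * (y3 - βB * y4) ≤ b * W := mul_le_mul_of_nonneg_left hy5.le hb
      nlinarith
  · rintro ⟨x1, x2, x3, x4⟩ ⟨hx1, hx2, hx3, hx4, hx5⟩ ⟨y1, y2, y3, y4⟩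
      ⟨hy1, hy2, hy3, hy4, hy5⟩ a b ha hb hab
    simp only [Prod.smul_mk, Prod.mk_add_mk, smul_eq_mul]
    rw [hCbar, hCbar, hCbar]
    have hneX := hne (x1, x2, x3, x4) hx1 hx2 hx3 hx4 hx5
    have hneY := hne (y1, y2, y3, y4) hy1 hy2 hy3 hy4 hy5
    refine le_of_forall_pos_le_add fun ε hε => ?_
    obtain ⟨c1, hc1, hc1lt⟩ := Real.lt_sInf_add_pos hneX hε
    obtain ⟨c2, hc2, hc2lt⟩ := Real.lt_sInf_add_pos hneY hε
    -- combined point is feasible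
    have hmem : a * c1 + b * c2 ∈ S (a * x1 + b * y1, a * x2 + b * y2,
        a * x3 + b * y3, a * x4 + b * y4) := by
      obtain ⟨E1, G1, p1, b1, hE1, hG1, hp1, hb1, hE1b, hpow1, hbw1, hq1, hc1eq⟩ := hc1
      obtain ⟨E2, G2, p2, b2, hE2, hG2, hp2, hb2, hE2b, hpow2, hbw2, hq2, hc2eq⟩ := hc2
      refine ⟨a * E1 + b * E2, a * G1 + b * G2,
        fun k => a * p1 k + b * p2 k, fun k => a * b1 k + b * b2 k,
        by positivity, by positivity,
        fun k hk => by have := hp1 k hk; have := hp2 k hk; positivity,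
        fun k hk => convex_pos ha hb hab (hb1 k hk) (hb2 k hk), ?_, ?_, ?_, ?_, ?_⟩
      · nlinarith [mul_le_mul_of_nonneg_left hE1b ha, mul_le_mul_of_nonneg_left hE2b hb]
      · rw [Finset.sum_add_distrib, ← Finset.mul_sum, ← Finset.mul_sum]
        simp only
        nlinarith [mul_le_mul_of_nonneg_left hpow1 ha, mul_le_mul_of_nonneg_left hpow2 hb]
      · rw [Finset.sum_add_distrib, ← Finset.mul_sum, ← Finset.mul_sum]
        simp only
        nlinarith [mul_le_mul_of_nonneg_left hbw1 ha, mul_le_mul_of_nonneg_left hbw2 hb]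
      · intro k hk
        have hgk := hg k hk
        have hb1k := hb1 k hk
        have hb2k := hb2 k hk
        have hp1k := hp1 k hk
        have hp2k := hp2 k hk
        have hBpos : 0 < a * b1 k + b * b2 k := convex_pos ha hb hab hb1k hb2k
        have hc : 0 < g k / N₀ := by positivity
        have harg1 : g k * p1 k / (b1 k * N₀) = g k / N₀ * (p1 k / b1 k) := by
          rw [div_mul_div_comm, mul_comm (b1 k) N₀]
        have harg2 : g k * p2 k / (b2 k * N₀) = g k / N₀ * (p2 k / b2 k) := by
          rw [div_mul_div_comm, mul_comm (b2 k) N₀]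
        have harg : g k * (a * p1 k + b * p2 k) / ((a * b1 k + b * b2 k) * N₀) =
            g k / N₀ * ((a * p1 k + b * p2 k) / (a * b1 k + b * b2 k)) := by
          rw [div_mul_div_comm, mul_comm (a * b1 k + b * b2 k) N₀]
        simp only
        rw [harg]
        have key := rate_concave hc hp1k hp2k hb1k hb2k ha hb hab
        have hq1k := hq1 k hk
        have hq2k := hq2 k hk
        rw [harg1] at hq1k
        rw [harg2] at hq2k
        have h1 : a * r k ≤ a * (b1 k * Real.logb 2 (1 + g k / N₀ * (p1 k / b1 k))) :=
          mul_le_mul_of_nonneg_left hq1k ha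
        have h2 : b * r k ≤ b * (b2 k * Real.logb 2 (1 + g k / N₀ * (p2 k / b2 k))) :=
          mul_le_mul_of_nonneg_left hq2k hb
        have hsum : a * r k + b * r k = r k := by rw [← add_mul, hab, one_mul]
        linarith [key, h1, h2]
      · rw [hc1eq, hc2eq]; ring
    have hle : sInf (S (a * x1 + b * y1, a * x2 + b * y2,
        a * x3 + b * y3, a * x4 + b * y4)) ≤ a * c1 + b * c2 :=
      csInf_le (hbdd _) hmem
    have : a * c1 + b * c2 ≤ a * sInf (S (x1, x2, x3, x4)) +
        b * sInf (S (y1, y2, y3, y4)) + ε := by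
      nlinarith [mul_le_mul_of_nonneg_left hc1lt.le ha, mul_le_mul_of_nonneg_left hc2lt.le hb]
    linarith
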